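/- Let ν be a natural number and w a complex number. With Γ_ν(s) = π^{ν(ν−1)/4} · ∏_{i=0}^{ν−1} Γ(s − i/2), the identity Γ_ν(w − (ν+1)/2) · ∏_{i=1}^{⌊ν/2⌋} Γ(w − i) = π^{ν(ν−1)/4} · ( ∏_{i=1}^{ν} Γ(w − i) ) · ∏_{i=1}^{⌊ν/2⌋} Γ(w + i − (2ν+1)/2) holds for every w ∈ ℂ. (Cross-multiplied form of Γ_ν(w − (ν+1)/2) · ∏_{i=1}^{⌊ν/2⌋} Γ(w−i)/Γ(w + i − (2ν+1)/2) = π^{ν(ν−1)/4} ∏_{i=1}^{ν} Γ(w−i).) -/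

import Mathlib

open Complex

/-- The Siegel Gamma factor `Γ_ν(s) = π^{ν(ν-1)/4} · ∏_{i=0}^{ν-1} Γ(s - i/2)`. -/
noncomputable def GammaSiegel (ν : ℕ) (s : ℂ) : ℂ :=
  (Real.pi : ℂ) ^ (((ν * (ν - 1) : ℕ) : ℂ) / 4) *
    ∏ i ∈ Finset.range ν, Complex.Gamma (s - (i : ℂ) / 2)

theorem stmt_12 (ν : ℕ) (w : ℂ) :
    GammaSiegel ν (w - ((ν : ℂ) + 1) / 2) *
        ∏ i ∈ Finset.Icc 1 (ν / 2), Complex.Gamma (w - (i : ℂ)) =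
      (Real.pi : ℂ) ^ (((ν * (ν - 1) : ℕ) : ℂ) / 4) *
        (∏ i ∈ Finset.Icc 1 ν, Complex.Gamma (w - (i : ℂ))) *
        ∏ i ∈ Finset.Icc 1 (ν / 2),
          Complex.Gamma (w + (i : ℂ) - (2 * (ν : ℂ) + 1) / 2) := by
  set m := ν / 2 with hm
  have hmν : m ≤ ν := Nat.div_le_self _ _
  -- Step 1 : reindex the GammaSiegel product over `Ico (ν+1) (2ν+1)`
  have h1 : (∏ i ∈ Finset.range ν,
        Complex.Gamma ((w - ((ν : ℂ) + 1) / 2) - (i : ℂ) / 2))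
      = ∏ k ∈ Finset.Ico (ν + 1) (2 * ν + 1), Complex.Gamma (w - (k : ℂ) / 2) := by
    rw [Finset.prod_Ico_eq_prod_range]
    have hν : 2 * ν + 1 - (ν + 1) = ν := by omega
    rw [hν]
    refine Finset.prod_congr rfl fun i _ => ?_
    congr 1
    push_cast
    ring
  -- Step 2 : split by parity
  have h2 : (∏ k ∈ Finset.Ico (ν + 1) (2 * ν + 1), Complex.Gamma (w - (k : ℂ) / 2))
      = (∏ k ∈ (Finset.Ico (ν + 1) (2 * ν + 1)).filter (fun k => k % 2 = 0),
          Complex.Gamma (w - (k : ℂ) / 2)) *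
        ∏ k ∈ (Finset.Ico (ν + 1) (2 * ν + 1)).filter (fun k => ¬ k % 2 = 0),
          Complex.Gamma (w - (k : ℂ) / 2) :=
    (Finset.prod_filter_mul_prod_filter_not _ _ _).symm
  -- even part
  have heven : (∏ k ∈ (Finset.Ico (ν + 1) (2 * ν + 1)).filter (fun k => k % 2 = 0),
        Complex.Gamma (w - (k : ℂ) / 2))
      = ∏ j ∈ Finset.Icc (m + 1) ν, Complex.Gamma (w - (j : ℂ)) := by
    refine (Finset.prod_nbij' (fun j => 2 * j) (fun k => k / 2) ?_ ?_ ?_ ?_ ?_).symm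
    · intro a ha
      simp only [Finset.mem_filter, Finset.mem_Ico, Finset.mem_Icc] at *
      omega
    · intro a ha
      simp only [Finset.mem_filter, Finset.mem_Ico, Finset.mem_Icc] at *
      omega
    · intro a _; omega
    · intro a ha
      simp only [Finset.mem_filter, Finset.mem_Ico] at ha
      omega
    · intro a _
      congr 1
      push_cast
      ring
  -- odd part
  have hodd : (∏ k ∈ (Finset.Ico (ν + 1) (2 * ν + 1)).filter (fun k => ¬ k % 2 = 0),
        Complex.Gamma (w - (k : ℂ) / 2))
      = ∏ i ∈ Finset.Icc 1 m, Complex.Gamma (w + (i : ℂ) - (2 * (ν : ℂ) + 1) / 2) := by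
    refine (Finset.prod_nbij' (fun i => 2 * (ν - i) + 1) (fun k => ν - k / 2) ?_ ?_ ?_ ?_ ?_).symm
    · intro a ha
      simp only [Finset.mem_filter, Finset.mem_Ico, Finset.mem_Icc] at *
      omega
    · intro a ha
      simp only [Finset.mem_filter, Finset.mem_Ico, Finset.mem_Icc] at *
      omega
    · intro a ha
      simp only [Finset.mem_Icc] at ha
      omega
    · intro a ha
      simp only [Finset.mem_filter, Finset.mem_Ico] at ha
      omega
    · intro a ha
      simp only [Finset.mem_Icc] at ha
      have hca : ((ν - a : ℕ) : ℂ) = (ν : ℂ) - (a : ℂ) := by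
        push_cast [Nat.cast_sub (le_trans ha.2 hmν)]
        ring
      congr 1
      push_cast [hca]
      ring
  -- combine integer products
  have h3 : (∏ j ∈ Finset.Icc (m + 1) ν, Complex.Gamma (w - (j : ℂ))) *
        (∏ i ∈ Finset.Icc 1 m, Complex.Gamma (w - (i : ℂ)))
      = ∏ i ∈ Finset.Icc 1 ν, Complex.Gamma (w - (i : ℂ)) := by
    rw [mul_comm]
    have e1 : Finset.Icc 1 m = Finset.Ioc 0 m := by rw [← Finset.Icc_add_one_left_eq_Ioc, zero_add]
    have e2 : Finset.Icc (m + 1) ν = Finset.Ioc m ν := by rw [← Finset.Icc_add_one_left_eq_Ioc]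
    have e3 : Finset.Icc 1 ν = Finset.Ioc 0 ν := by rw [← Finset.Icc_add_one_left_eq_Ioc, zero_add]
    rw [e1, e2, e3]
    exact Finset.prod_Ioc_consecutive _ (Nat.zero_le m) hmν
  unfold GammaSiegel
  rw [h1, h2, heven, hodd]
  rw [mul_assoc, mul_assoc, ← h3]
  ring
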